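/- The trace of A equals (n+1)(α_1 + α_k), and for every x ∈ H_n and every r > 0 the quasimetric ball B(x,r) = { y ∈ H_n : d_A(x,y) < r } satisfies m(B(x,r)) = r^{(n+1)(α_1+α_k)} · m(B(0,1)); in particular the measure m is Ahlfors Q-regular on (H_n, d_A) with Q = (n+1)(α_1+α_k). -/

import Mathlib

open scoped BigOperators RealInnerProductSpace ENNReal
open Module Filter

noncomputable section

/-- The underlying space of the `n`-th Heisenberg group/algebra: `ℝ^{2n+1}`
with a fixed inner product. -/
abbrev HV (n : ℕ) : Type := EuclideanSpace ℝ (Fin (2 * n + 1))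

/-- `br` is a Heisenberg Lie bracket on `ℝ^{2n+1}`: with respect to some basis
`b`, the only nontrivial bracket relations are `[b_{2s}, b_{2s+1}] = b_{2n}` (0-indexed). -/
def IsHeisenbergBracket (n : ℕ) (br : HV n →ₗ[ℝ] HV n →ₗ[ℝ] HV n) : Prop :=
  ∃ b : Basis (Fin (2 * n + 1)) ℝ (HV n),
    ∀ i j : Fin (2 * n + 1),
      br (b i) (b j) =
        (if (i : ℕ) % 2 = 0 ∧ (j : ℕ) = (i : ℕ) + 1 ∧ (i : ℕ) < 2 * n then (1 : ℝ)
         else if (j : ℕ) % 2 = 0 ∧ (i : ℕ) = (j : ℕ) + 1 ∧ (j : ℕ) < 2 * n then (-1 : ℝ)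
         else 0) • b ⟨2 * n, by omega⟩

/-- `A` is a derivation of the Lie algebra `(ℝ^{2n+1}, br)`. -/
def IsDerivation {n : ℕ} (br : HV n →ₗ[ℝ] HV n →ₗ[ℝ] HV n)
    (A : HV n →ₗ[ℝ] HV n) : Prop :=
  ∀ x y, A (br x y) = br (A x) y + br x (A y)

/-- The group product `x * y = x + y + (1/2)[x,y]` (BCH formula). -/
def hMul {n : ℕ} (br : HV n →ₗ[ℝ] HV n →ₗ[ℝ] HV n) (x y : HV n) : HV n :=
  x + y + (2⁻¹ : ℝ) • br x y

/-- The left coset `g * S`. -/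
def leftCoset {n : ℕ} (br : HV n →ₗ[ℝ] HV n →ₗ[ℝ] HV n) (g : HV n)
    (S : Set (HV n)) : Set (HV n) :=
  hMul br g '' S

/-- `‖x‖_A = Σ_i |x_i|^{1/α_i}`, where `x_i` is the component of `x` in the
eigenspace `U i` (computed as the orthogonal projection; the eigenspaces are
assumed mutually orthogonal with sum everything). -/
def normA {n k : ℕ} (α : Fin (k + 1) → ℝ) (U : Fin (k + 1) → Submodule ℝ (HV n))
    (x : HV n) : ℝ :=
  ∑ i, ‖((U i).orthogonalProjectionOnto x : HV n)‖ ^ (α i)⁻¹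

/-- The parabolic visual quasimetric `d_A(p,q) = ‖(-p) * q‖_A`. -/
def qd {n k : ℕ} (br : HV n →ₗ[ℝ] HV n →ₗ[ℝ] HV n) (α : Fin (k + 1) → ℝ)
    (U : Fin (k + 1) → Submodule ℝ (HV n)) (p q : HV n) : ℝ :=
  normA α U (hMul br (-p) q)

/-- `η` is a homeomorphism of `[0,∞)` onto itself. -/
def IsHomeoOfNonneg (η : ℝ → ℝ) : Prop :=
  η 0 = 0 ∧ StrictMonoOn η (Set.Ici 0) ∧ ContinuousOn η (Set.Ici 0) ∧
    ∀ s : ℝ, 0 ≤ s → ∃ t : ℝ, 0 ≤ t ∧ η t = s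

/-- `F` is an `η`-quasisymmetry from `(X, d1)` to `(X, d2)`. -/
def IsQS {X : Type*} (d1 d2 : X → X → ℝ) (η : ℝ → ℝ) (F : X → X) : Prop :=
  Function.Bijective F ∧
    ∀ x y z : X, x ≠ y → y ≠ z → x ≠ z →
      d2 (F x) (F y) / d2 (F x) (F z) ≤ η (d1 x y / d1 x z)

/-- `L_F(x,r) = sup { d2(F x, F x') : d1(x,x') ≤ r }`. -/
def LFr {X : Type*} (d1 d2 : X → X → ℝ) (F : X → X) (x : X) (r : ℝ) : ℝ≥0∞ :=
  ⨆ (x' : X) (_ : d1 x x' ≤ r), ENNReal.ofReal (d2 (F x) (F x'))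

/-- `l_F(x,r) = inf { d2(F x, F x') : d1(x,x') ≥ r }`. -/
def lFr {X : Type*} (d1 d2 : X → X → ℝ) (F : X → X) (x : X) (r : ℝ) : ℝ≥0∞ :=
  ⨅ (x' : X) (_ : r ≤ d1 x x'), ENNReal.ofReal (d2 (F x) (F x'))

/-- `L_F(x) = limsup_{r→0⁺} L_F(x,r)/r`. -/
def LF {X : Type*} (d1 d2 : X → X → ℝ) (F : X → X) (x : X) : ℝ≥0∞ :=
  Filter.limsup (fun r : ℝ => LFr d1 d2 F x r / ENNReal.ofReal r) (nhdsWithin 0 (Set.Ioi 0))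

/-- `l_F(x) = liminf_{r→0⁺} l_F(x,r)/r`. -/
def lF {X : Type*} (d1 d2 : X → X → ℝ) (F : X → X) (x : X) : ℝ≥0∞ :=
  Filter.liminf (fun r : ℝ => lFr d1 d2 F x r / ENNReal.ofReal r) (nhdsWithin 0 (Set.Ioi 0))

section Aux

variable {n : ℕ} (br : HV n →ₗ[ℝ] HV n →ₗ[ℝ] HV n)
  (b : Basis (Fin (2 * n + 1)) ℝ (HV n))

/-- the last basis index -/
def lidx (n : ℕ) : Fin (2 * n + 1) := ⟨2 * n, by omega⟩

variable (hb : ∀ i j : Fin (2 * n + 1),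
      br (b i) (b j) =
        (if (i : ℕ) % 2 = 0 ∧ (j : ℕ) = (i : ℕ) + 1 ∧ (i : ℕ) < 2 * n then (1 : ℝ)
         else if (j : ℕ) % 2 = 0 ∧ (i : ℕ) = (j : ℕ) + 1 ∧ (j : ℕ) < 2 * n then (-1 : ℝ)
         else 0) • b (lidx n))

include hb

lemma br_mem_span (x y : HV n) :
    br x y ∈ Submodule.span ℝ {b (lidx n)} := by
  rw [← b.sum_repr x, ← b.sum_repr y]
  simp only [map_sum, map_smul, LinearMap.sum_apply, LinearMap.smul_apply]
  refine Submodule.sum_mem _ fun i _ => Submodule.smul_mem _ _ ?_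
  refine Submodule.sum_mem _ fun j _ => Submodule.smul_mem _ _ ?_
  rw [hb]
  exact Submodule.smul_mem _ _ (Submodule.mem_span_singleton_self _)

lemma br_Z_left (x : HV n) : br (b (lidx n)) x = 0 := by
  have hlv : ((lidx n : Fin (2 * n + 1)) : ℕ) = 2 * n := rfl
  have : br (b (lidx n)) = 0 := by
    apply b.ext
    intro j
    have hj := j.isLt
    rw [hb]
    rw [if_neg (by omega), if_neg (by omega), zero_smul,
      LinearMap.zero_apply]
  rw [this]; rfl

lemma br_Z_right (x : HV n) : br x (b (lidx n)) = 0 := by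
  have hlv : ((lidx n : Fin (2 * n + 1)) : ℕ) = 2 * n := rfl
  have : br.flip (b (lidx n)) = 0 := by
    apply b.ext
    intro i
    have hi := i.isLt
    simp only [LinearMap.flip_apply]
    rw [hb]
    rw [if_neg (by omega), if_neg (by omega), zero_smul,
      LinearMap.zero_apply]
  have := congrFun (congrArg (fun f => f.toFun) this) x
  simpa [LinearMap.flip_apply] using this

lemma br_x_basis (x : HV n) (j : Fin (2 * n + 1)) :
    br x (b j) = (∑ l, b.repr x l *
        (if (l : ℕ) % 2 = 0 ∧ (j : ℕ) = (l : ℕ) + 1 ∧ (l : ℕ) < 2 * n then (1 : ℝ)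
         else if (j : ℕ) % 2 = 0 ∧ (l : ℕ) = (j : ℕ) + 1 ∧ (j : ℕ) < 2 * n then (-1 : ℝ)
         else 0)) • b (lidx n) := by
  conv_lhs => rw [← b.sum_repr x]
  rw [map_sum, LinearMap.sum_apply]
  rw [Finset.sum_smul]
  refine Finset.sum_congr rfl fun l _ => ?_
  rw [map_smul, LinearMap.smul_apply, hb, smul_smul]

lemma br_nondeg (x : HV n) (h : ∀ y, br x y = 0) :
    x ∈ Submodule.span ℝ {b (lidx n)} := by
  have hrep : ∀ i : Fin (2 * n + 1), i ≠ lidx n → b.repr x i = 0 := by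
    intro i hi
    have hilt : (i : ℕ) < 2 * n := by
      have := i.isLt
      have : (i : ℕ) ≠ 2 * n := fun hc => hi (Fin.ext hc)
      omega
    rcases Nat.even_or_odd (i : ℕ) with he | ho
    · -- i even, use j = i+1
      have he' : (i : ℕ) % 2 = 0 := Nat.even_iff.mp he
      set j : Fin (2 * n + 1) := ⟨(i : ℕ) + 1, by omega⟩ with hjdef
      have h0 := h (b j)
      rw [br_x_basis br b hb x j] at h0
      have hsum : (∑ l, b.repr x l *
          (if (l : ℕ) % 2 = 0 ∧ (j : ℕ) = (l : ℕ) + 1 ∧ (l : ℕ) < 2 * n then (1 : ℝ)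
           else if (j : ℕ) % 2 = 0 ∧ (l : ℕ) = (j : ℕ) + 1 ∧ (j : ℕ) < 2 * n then (-1 : ℝ)
           else 0)) = b.repr x i := by
        rw [Finset.sum_eq_single i]
        · rw [if_pos ⟨he', rfl, hilt⟩, mul_one]
        · intro l _ hl
          have hlne : (l : ℕ) ≠ (i : ℕ) := fun hc => hl (Fin.ext hc)
          rw [if_neg (by simp only [hjdef]; omega), if_neg (by simp only [hjdef]; omega),
            mul_zero]
        · intro hmem; exact absurd (Finset.mem_univ i) hmem
      rw [hsum] at h0
      exact (smul_eq_zero.mp h0).resolve_right (b.ne_zero _)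
    · -- i odd, use j = i-1
      have ho' : (i : ℕ) % 2 = 1 := Nat.odd_iff.mp ho
      have hipos : 0 < (i : ℕ) := by omega
      set j : Fin (2 * n + 1) := ⟨(i : ℕ) - 1, by omega⟩ with hjdef
      have hjv : (j : ℕ) = (i : ℕ) - 1 := rfl
      have h0 := h (b j)
      rw [br_x_basis br b hb x j] at h0
      have hsum : (∑ l, b.repr x l *
          (if (l : ℕ) % 2 = 0 ∧ (j : ℕ) = (l : ℕ) + 1 ∧ (l : ℕ) < 2 * n then (1 : ℝ)
           else if (j : ℕ) % 2 = 0 ∧ (l : ℕ) = (j : ℕ) + 1 ∧ (j : ℕ) < 2 * n then (-1 : ℝ)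
           else 0)) = -(b.repr x i) := by
        rw [Finset.sum_eq_single i]
        · rw [if_neg (by simp only [hjv]; omega), if_pos ⟨by omega, by omega, by omega⟩]
          ring
        · intro l _ hl
          have hlne : (l : ℕ) ≠ (i : ℕ) := fun hc => hl (Fin.ext hc)
          rw [if_neg (by simp only [hjv]; omega), if_neg (by simp only [hjv]; omega),
            mul_zero]
        · intro hmem; exact absurd (Finset.mem_univ i) hmem
      rw [hsum] at h0
      have := (smul_eq_zero.mp h0).resolve_right (b.ne_zero _)
      linarith [this]
  -- conclude
  have : x = b.repr x (lidx n) • b (lidx n) := by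
    conv_lhs => rw [← b.sum_repr x]
    rw [Finset.sum_eq_single (lidx n)]
    · intro l _ hl; rw [hrep l hl, zero_smul]
    · intro hmem; exact absurd (Finset.mem_univ _) hmem
  rw [this]
  exact Submodule.smul_mem _ _ (Submodule.mem_span_singleton_self _)

lemma br_b01 (hn : 1 ≤ n) :
    br (b ⟨0, by omega⟩) (b ⟨1, by omega⟩) = b (lidx n) := by
  rw [hb]
  rw [if_pos ⟨by norm_num, by norm_num, by show 0 < 2 * n; omega⟩, one_smul]

end Aux

section Aux2

variable {n k : ℕ} (U : Fin (k + 1) → Submodule ℝ (HV n))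

/-- the orthogonal projection as a linear endomorphism of `HV n` -/
def Plin (i : Fin (k + 1)) : HV n →ₗ[ℝ] HV n :=
  (U i).subtype.comp ((U i).orthogonalProjectionOnto : HV n →ₗ[ℝ] U i)

lemma Plin_apply (i : Fin (k + 1)) (x : HV n) :
    Plin U i x = ((U i).orthogonalProjectionOnto x : HV n) := rfl

variable (hUorth : ∀ i j, i ≠ j → ∀ x ∈ U i, ∀ y ∈ U j, (inner ℝ x y : ℝ) = 0)

lemma Plin_self {i : Fin (k + 1)} {y : HV n} (hy : y ∈ U i) : Plin U i y = y := by
  rw [Plin_apply]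
  have : (U i).orthogonalProjectionOnto ((⟨y, hy⟩ : U i) : HV n) = ⟨y, hy⟩ :=
    Submodule.orthogonalProjectionOnto_mem_subspace_eq_self _
  rw [show (( ⟨y, hy⟩ : U i) : HV n) = y from rfl] at this
  rw [this]

include hUorth

lemma Plin_zero {i j : Fin (k + 1)} (hij : i ≠ j) {y : HV n} (hy : y ∈ U j) :
    Plin U i y = 0 := by
  rw [Plin_apply]
  have hmem : y ∈ (U i)ᗮ := by
    intro u hu
    exact hUorth i j hij u hu y hy
  rw [Submodule.orthogonalProjectionOnto_apply_of_mem_orthogonal hmem]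
  rfl

variable (hUspan : (⨆ i, U i) = ⊤)
include hUspan

lemma Plin_decomp (y : HV n) : ∑ i, Plin U i y = y := by
  have hmem : y ∈ ⨆ i, U i := by rw [hUspan]; trivial
  refine Submodule.iSup_induction (motive := fun z => ∑ i, Plin U i z = z) U hmem ?_ ?_ ?_
  · intro j z hz
    rw [Finset.sum_eq_single j]
    · exact Plin_self U hz
    · intro l _ hl; exact Plin_zero U hUorth hl hz
    · intro hmem'; exact absurd (Finset.mem_univ _) hmem'
  · simp only [map_zero, Finset.sum_const_zero]
  · intro a b ha hb
    simp only [map_add, Finset.sum_add_distrib, ha, hb]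

/-- uniqueness of decomposition -/
lemma Plin_unique (v : Fin (k + 1) → HV n) (hv : ∀ i, v i ∈ U i) (j : Fin (k + 1)) :
    Plin U j (∑ i, v i) = v j := by
  rw [map_sum, Finset.sum_eq_single j]
  · exact Plin_self U (hv j)
  · intro l _ hl; exact Plin_zero U hUorth (Ne.symm hl) (hv l)
  · intro hmem'; exact absurd (Finset.mem_univ _) hmem'

end Aux2

section Aux3

variable {n k : ℕ}
  (br : HV n →ₗ[ℝ] HV n →ₗ[ℝ] HV n)
  (b : Basis (Fin (2 * n + 1)) ℝ (HV n))
  (A : HV n →ₗ[ℝ] HV n)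
  (α : Fin (k + 1) → ℝ)
  (U : Fin (k + 1) → Submodule ℝ (HV n))

variable (hb : ∀ i j : Fin (2 * n + 1),
      br (b i) (b j) =
        (if (i : ℕ) % 2 = 0 ∧ (j : ℕ) = (i : ℕ) + 1 ∧ (i : ℕ) < 2 * n then (1 : ℝ)
         else if (j : ℕ) % 2 = 0 ∧ (i : ℕ) = (j : ℕ) + 1 ∧ (j : ℕ) < 2 * n then (-1 : ℝ)
         else 0) • b (lidx n))
  (hA : IsDerivation br A)
  (hαmono : StrictMono α) (hαpos : ∀ i, 0 < α i)
  (hU : ∀ i, U i = Module.End.eigenspace A (α i))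
  (hUne : ∀ i, U i ≠ ⊥) (hUspan : (⨆ i, U i) = ⊤)
  (hUorth : ∀ i j, i ≠ j → ∀ x ∈ U i, ∀ y ∈ U j, (inner ℝ x y : ℝ) = 0)

section EigBasic
include hU

lemma eig_apply {i : Fin (k + 1)} {x : HV n} (hx : x ∈ U i) : A x = α i • x :=
  Module.End.mem_eigenspace_iff.mp (by rw [← hU i]; exact hx)

include hαmono
lemma U_disjoint {i j : Fin (k + 1)} (hij : i ≠ j) {x : HV n}
    (hxi : x ∈ U i) (hxj : x ∈ U j) : x = 0 := by
  have h1 := eig_apply A α U hU hxi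
  have h2 := eig_apply A α U hU hxj
  have h3 : (α i - α j) • x = 0 := by rw [sub_smul, h1.symm, h2.symm, sub_self]
  rcases smul_eq_zero.mp h3 with h | h
  · exact absurd (sub_eq_zero.mp h) (fun hc => hij (hαmono.injective hc))
  · exact h

end EigBasic

section ZEig
include hb hA

lemma AZ_mem_span (hn : 1 ≤ n) :
    A (b (lidx n)) ∈ Submodule.span ℝ {b (lidx n)} := by
  have h01 := br_b01 br b hb hn
  have h2 : A (br (b ⟨0, by omega⟩) (b ⟨1, by omega⟩)) ∈
      Submodule.span ℝ {b (lidx n)} := by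
    rw [hA]
    exact Submodule.add_mem _ (br_mem_span br b hb _ _) (br_mem_span br b hb _ _)
  rwa [h01] at h2

lemma exists_eig_Z (hn : 1 ≤ n) : ∃ β : ℝ, A (b (lidx n)) = β • b (lidx n) := by
  obtain ⟨c, hc⟩ := Submodule.mem_span_singleton.mp (AZ_mem_span br b A hb hA hn)
  exact ⟨c, hc.symm⟩

end ZEig

section ZMem
include hαmono hU hUspan hUorth

lemma Z_mem {β : ℝ} (hβ : A (b (lidx n)) = β • b (lidx n)) :
    ∃ i0, β = α i0 ∧ b (lidx n) ∈ U i0 := by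
  set Z := b (lidx n) with hZdef
  have hdecomp : ∑ i, Plin U i Z = Z := Plin_decomp U hUorth hUspan Z
  have hmemi : ∀ i, Plin U i Z ∈ U i := fun i => SetLike.coe_mem _
  have hkey : ∀ j, α j • Plin U j Z = β • Plin U j Z := by
    intro j
    have h1 : Plin U j (A Z) = α j • Plin U j Z := by
      have hAZ : A Z = ∑ i, α i • Plin U i Z := by
        conv_lhs => rw [← hdecomp]
        rw [map_sum]
        exact Finset.sum_congr rfl fun i _ => eig_apply A α U hU (hmemi i)
      rw [hAZ]
      exact Plin_unique U hUorth hUspan _ (fun i => Submodule.smul_mem _ _ (hmemi i)) j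
    have h2 : Plin U j (A Z) = β • Plin U j Z := by
      have hAZ : A Z = ∑ i, β • Plin U i Z := by
        rw [hβ]
        conv_lhs => rw [← hdecomp]
        rw [Finset.smul_sum]
      rw [hAZ]
      exact Plin_unique U hUorth hUspan _ (fun i => Submodule.smul_mem _ _ (hmemi i)) j
    rw [← h1, h2]
  have hZne : Z ≠ 0 := b.ne_zero _
  have hex : ∃ i0, Plin U i0 Z ≠ 0 := by
    by_contra hc
    push_neg at hc
    exact hZne (by rw [← hdecomp, Finset.sum_congr rfl fun i _ => hc i,
      Finset.sum_const_zero])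
  obtain ⟨i0, hi0⟩ := hex
  have hβα : β = α i0 := by
    have := hkey i0
    have h3 : (α i0 - β) • Plin U i0 Z = 0 := by rw [sub_smul, this, sub_self]
    rcases smul_eq_zero.mp h3 with h | h
    · exact (sub_eq_zero.mp h).symm
    · exact absurd h hi0
  refine ⟨i0, hβα, ?_⟩
  have hzero : ∀ j, j ≠ i0 → Plin U j Z = 0 := by
    intro j hj
    have := hkey j
    rw [hβα] at this
    have h3 : (α j - α i0) • Plin U j Z = 0 := by rw [sub_smul, this, sub_self]
    rcases smul_eq_zero.mp h3 with h | h
    · exact absurd (hαmono.injective (sub_eq_zero.mp h)) hj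
    · exact h
  have : Z = Plin U i0 Z :=
    hdecomp.symm.trans (Finset.sum_eq_single i0 (fun l _ hl => hzero l hl)
      (fun hm => absurd (Finset.mem_univ _) hm))
  rw [this]
  exact hmemi i0

end ZMem

section Pairing
include hb hA hU hUorth hUspan

lemma pairing {β : ℝ} (hβ : A (b (lidx n)) = β • b (lidx n))
    {i : Fin (k + 1)} {x : HV n} (hx : x ∈ U i)
    (hxZ : x ∉ Submodule.span ℝ {b (lidx n)}) :
    ∃ j, α i + α j = β := by
  set Z := b (lidx n) with hZdef
  have hy0 : ∃ y0, br x y0 ≠ 0 := by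
    by_contra hc
    push_neg at hc
    exact hxZ (br_nondeg br b hb x hc)
  obtain ⟨y0, hy0⟩ := hy0
  have hdecomp : ∑ l, Plin U l y0 = y0 := Plin_decomp U hUorth hUspan y0
  have hsum : ∑ l, br x (Plin U l y0) = br x y0 := by
    rw [← map_sum, hdecomp]
  have hex : ∃ l, br x (Plin U l y0) ≠ 0 := by
    by_contra hc
    push_neg at hc
    exact hy0 (by rw [← hsum, Finset.sum_congr rfl fun l _ => hc l,
      Finset.sum_const_zero])
  obtain ⟨l, hl⟩ := hex
  set w := br x (Plin U l y0) with hwdef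
  have hmem : Plin U l y0 ∈ U l := SetLike.coe_mem _
  have hAw : A w = (α i + α l) • w := by
    rw [hwdef, hA, eig_apply A α U hU hx, eig_apply A α U hU hmem]
    rw [map_smul, LinearMap.smul_apply, map_smul, add_smul]
  have hwspan : w ∈ Submodule.span ℝ {Z} := br_mem_span br b hb _ _
  obtain ⟨c, hc⟩ := Submodule.mem_span_singleton.mp hwspan
  have hAw2 : A w = β • w := by
    rw [← hc, map_smul, hβ, smul_comm]
  have h3 : (α i + α l - β) • w = 0 := by rw [sub_smul, ← hAw, hAw2, sub_self]
  rcases smul_eq_zero.mp h3 with h | h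
  · exact ⟨l, by linarith [sub_eq_zero.mp h]⟩
  · exact absurd h hl

end Pairing

section DimLe
include hb hA hαmono hU hUorth hUspan

lemma dim_le (hZκ : b (lidx n) ∈ U (Fin.last k))
    {i j : Fin (k + 1)} (hiκ : i ≠ Fin.last k)
    (hij : α i + α j = α (Fin.last k)) :
    Module.finrank ℝ (U i) ≤ Module.finrank ℝ (U j) := by
  classical
  set Z := b (lidx n) with hZdef
  have hspan_eq_zero : ∀ w ∈ Submodule.span ℝ ({Z} : Set (HV n)),
      b.coord (lidx n) w = 0 → w = 0 := by
    intro w hw h0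
    obtain ⟨c, hc⟩ := Submodule.mem_span_singleton.mp hw
    rw [← hc] at h0 ⊢
    rw [map_smul, Basis.coord_apply, Basis.repr_self] at h0
    simp only [Finsupp.single_eq_same, smul_eq_mul, mul_one] at h0
    rw [h0, zero_smul]
  have hinj : Function.Injective
      (((LinearMap.compr₂ br (b.coord (lidx n))).comp (U i).subtype).compl₂
        (U j).subtype : U i →ₗ[ℝ] Module.Dual ℝ (U j)) := by
    rw [← LinearMap.ker_eq_bot, Submodule.eq_bot_iff]
    rintro ⟨x, hx⟩ hker
    rw [LinearMap.mem_ker] at hker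
    have hzero : ∀ y ∈ U j, br x y = 0 := by
      intro y hy
      have := congrFun (congrArg DFunLike.coe hker) ⟨y, hy⟩
      simp only [LinearMap.compl₂_apply, LinearMap.comp_apply,
        Submodule.coe_subtype, LinearMap.zero_apply, LinearMap.compr₂_apply] at this
      exact hspan_eq_zero _ (br_mem_span br b hb _ _) this
    have hzeroall : ∀ y : HV n, br x y = 0 := by
      intro y
      have hdecomp : ∑ l, Plin U l y = y := Plin_decomp U hUorth hUspan y
      rw [← hdecomp, map_sum]
      refine Finset.sum_eq_zero fun l _ => ?_
      by_cases hlj : l = j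
      · subst hlj; exact hzero _ (SetLike.coe_mem _)
      · by_contra hne
        set w := br x (Plin U l y) with hwdef
        have hmem : Plin U l y ∈ U l := SetLike.coe_mem _
        have hAw : A w = (α i + α l) • w := by
          rw [hwdef, hA, eig_apply A α U hU hx, eig_apply A α U hU hmem]
          rw [map_smul, LinearMap.smul_apply, map_smul, add_smul]
        have hwU : w ∈ U (Fin.last k) := by
          have hle : Submodule.span ℝ ({Z} : Set (HV n)) ≤ U (Fin.last k) :=
            (Submodule.span_singleton_le_iff_mem _ _).mpr hZκ
          exact hle (br_mem_span br b hb _ _)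
        have hAw2 : A w = α (Fin.last k) • w := eig_apply A α U hU hwU
        have h3 : (α i + α l - α (Fin.last k)) • w = 0 := by
          rw [sub_smul, ← hAw, hAw2, sub_self]
        rcases smul_eq_zero.mp h3 with h | h
        · have : α l = α j := by linarith [sub_eq_zero.mp h]
          exact hlj (hαmono.injective this)
        · exact hne h
    have hxspan : x ∈ Submodule.span ℝ ({Z} : Set (HV n)) :=
      br_nondeg br b hb x hzeroall
    have hxκ : x ∈ U (Fin.last k) :=
      (Submodule.span_singleton_le_iff_mem _ _).mpr hZκ hxspan
    have : x = 0 := U_disjoint A α U hαmono hU hiκ hx hxκ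
    exact Subtype.ext this
  calc Module.finrank ℝ (U i) ≤ Module.finrank ℝ (Module.Dual ℝ (U j)) :=
        LinearMap.finrank_le_finrank_of_injective hinj
    _ = Module.finrank ℝ (U j) := Subspace.dual_finrank_eq

end DimLe

end Aux3

section Aux4

variable {n k : ℕ}
  (br : HV n →ₗ[ℝ] HV n →ₗ[ℝ] HV n)
  (b : Basis (Fin (2 * n + 1)) ℝ (HV n))
  (A : HV n →ₗ[ℝ] HV n)
  (α : Fin (k + 1) → ℝ)
  (U : Fin (k + 1) → Submodule ℝ (HV n))

variable (hb : ∀ i j : Fin (2 * n + 1),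
      br (b i) (b j) =
        (if (i : ℕ) % 2 = 0 ∧ (j : ℕ) = (i : ℕ) + 1 ∧ (i : ℕ) < 2 * n then (1 : ℝ)
         else if (j : ℕ) % 2 = 0 ∧ (i : ℕ) = (j : ℕ) + 1 ∧ (j : ℕ) < 2 * n then (-1 : ℝ)
         else 0) • b (lidx n))
  (hA : IsDerivation br A)
  (hαmono : StrictMono α) (hαpos : ∀ i, 0 < α i)
  (hU : ∀ i, U i = Module.End.eigenspace A (α i))
  (hUne : ∀ i, U i ≠ ⊥) (hUspan : (⨆ i, U i) = ⊤)
  (hUorth : ∀ i j, i ≠ j → ∀ x ∈ U i, ∀ y ∈ U j, (inner ℝ x y : ℝ) = 0)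

include hb hA hαmono hαpos hU hUne hUspan hUorth

lemma alpha_sum_eq (hn : 1 ≤ n) (hk : 1 ≤ k)
    (hdsum : ∑ i, Module.finrank ℝ (U i) = 2 * n + 1) :
    (∑ i, (Module.finrank ℝ (U i) : ℝ) * α i) =
      ((n : ℝ) + 1) * (α 0 + α ⟨k - 1, by omega⟩) := by
  classical
  obtain ⟨β, hβ⟩ := exists_eig_Z br b A hb hA hn
  obtain ⟨i0, hβα, hZ0⟩ := Z_mem b A α U hαmono hU hUspan hUorth hβ
  have hlast : i0 = Fin.last k := by
    by_contra hne
    obtain ⟨x, hxU, hxne⟩ := (Submodule.ne_bot_iff _).mp (hUne (Fin.last k))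
    have hxZ : x ∉ Submodule.span ℝ {b (lidx n)} := by
      intro hc
      exact hxne (U_disjoint A α U hαmono hU hne
        ((Submodule.span_singleton_le_iff_mem _ _).mpr hZ0 hc) hxU)
    obtain ⟨j, hj⟩ := pairing br b A α U hb hA hU hUspan hUorth hβ hxU hxZ
    have h1 : α i0 ≤ α (Fin.last k) := hαmono.monotone (Fin.le_last i0)
    have h2 := hαpos j
    rw [hβα] at hj
    linarith
  rw [hlast] at hβα hZ0
  -- pairing function
  have hpair : ∀ i : Fin (k + 1), i ≠ Fin.last k →
      ∃ j, j ≠ Fin.last k ∧ α i + α j = α (Fin.last k) := by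
    intro i hi
    obtain ⟨x, hxU, hxne⟩ := (Submodule.ne_bot_iff _).mp (hUne i)
    have hxZ : x ∉ Submodule.span ℝ {b (lidx n)} := by
      intro hc
      exact hxne (U_disjoint A α U hαmono hU hi hxU
        ((Submodule.span_singleton_le_iff_mem _ _).mpr hZ0 hc))
    obtain ⟨j, hj⟩ := pairing br b A α U hb hA hU hUspan hUorth hβ hxU hxZ
    rw [← hβα]
    refine ⟨j, ?_, hj⟩
    intro hjl
    rw [hjl, hβα] at hj
    have := hαpos i
    have h1 : α i ≤ α (Fin.last k) := hαmono.monotone (Fin.le_last i)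
    linarith
  have hchoice : ∀ i : Fin (k + 1), ∃ j, i ≠ Fin.last k →
      (j ≠ Fin.last k ∧ α i + α j = α (Fin.last k)) := by
    intro i
    by_cases hi : i = Fin.last k
    · exact ⟨0, fun h => absurd hi h⟩
    · obtain ⟨j, hj⟩ := hpair i hi; exact ⟨j, fun _ => hj⟩
  choose σ hσ using hchoice
  -- dimensions are equal in pairs
  have hdim : ∀ i, (hi : i ≠ Fin.last k) →
      Module.finrank ℝ (U (σ i)) = Module.finrank ℝ (U i) := by
    intro i hi
    refine le_antisymm
      (dim_le br b A α U hb hA hαmono hU hUspan hUorth hZ0 (hσ i hi).1 ?_)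
      (dim_le br b A α U hb hA hαmono hU hUspan hUorth hZ0 hi (hσ i hi).2)
    rw [add_comm]; exact (hσ i hi).2
  -- U last is the span of Z
  have hUlast_le : U (Fin.last k) ≤ Submodule.span ℝ {b (lidx n)} := by
    intro x hxU
    by_contra hxZ
    obtain ⟨j, hj⟩ := pairing br b A α U hb hA hU hUspan hUorth hβ hxU hxZ
    rw [hβα] at hj
    have := hαpos j
    linarith
  have hUlast : U (Fin.last k) = Submodule.span ℝ {b (lidx n)} :=
    le_antisymm hUlast_le ((Submodule.span_singleton_le_iff_mem _ _).mpr hZ0)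
  have hdlast : Module.finrank ℝ (U (Fin.last k)) = 1 := by
    rw [hUlast]
    exact finrank_span_singleton (b.ne_zero _)
  -- index κ' = k-1
  have hκ'ne : (⟨k - 1, by omega⟩ : Fin (k + 1)) ≠ Fin.last k := by
    intro hc
    have := congrArg Fin.val hc
    simp only [Fin.val_last] at this
    omega
  have h0ne : (0 : Fin (k + 1)) ≠ Fin.last k := by
    intro hc
    have := congrArg Fin.val hc
    simp only [Fin.val_last, Fin.val_zero] at this
    omega
  have hαle : ∀ j, j ≠ Fin.last k → α j ≤ α (⟨k - 1, by omega⟩ : Fin (k + 1)) := by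
    intro j hj
    apply hαmono.monotone
    rw [Fin.le_def]
    have h1 := j.isLt
    have h2 : (j : ℕ) ≠ k := by
      intro hc; exact hj (Fin.ext (by simp only [Fin.val_last]; exact hc))
    simp only [Fin.val_last]
    omega
  have hσ0 : α 0 + α (σ 0) = α (Fin.last k) := (hσ 0 h0ne).2
  have hσ0κ' : σ 0 = (⟨k - 1, by omega⟩ : Fin (k + 1)) := by
    by_contra hne
    have hlt : α (σ 0) < α (⟨k - 1, by omega⟩ : Fin (k + 1)) :=
      lt_of_le_of_ne (hαle _ (hσ 0 h0ne).1) (fun hc => hne (hαmono.injective hc))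
    have h2 := (hσ _ hκ'ne).2
    have h3 : α 0 ≤ α (σ (⟨k - 1, by omega⟩ : Fin (k + 1))) :=
      hαmono.monotone (Fin.zero_le _)
    linarith
  -- the involution on Fin k
  have hcsne : ∀ i : Fin k, i.castSucc ≠ Fin.last k := by
    intro i hc
    have := congrArg Fin.val hc
    simp only [Fin.coe_castSucc, Fin.val_last] at this
    have := i.isLt
    omega
  have hσval : ∀ i : Fin k, (σ i.castSucc).1 < k := by
    intro i
    have h1 := (hσ i.castSucc (hcsne i)).1
    have h2 := (σ i.castSucc).isLt
    have h3 : ((σ i.castSucc) : ℕ) ≠ k := by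
      intro hc; exact h1 (Fin.ext (by simp only [Fin.val_last]; exact hc))
    omega
  set τ : Fin k → Fin k := fun i => ⟨(σ i.castSucc).1, hσval i⟩ with hτdef
  have hτcast : ∀ i : Fin k, (τ i).castSucc = σ i.castSucc := by
    intro i; apply Fin.ext; simp [hτdef]
  have hτinv : Function.Involutive τ := by
    intro i
    apply Fin.ext
    have h0 : (τ (τ i)).1 = ((σ (τ i).castSucc) : ℕ) := by simp [hτdef]
    rw [h0, hτcast]
    have h1 := (hσ i.castSucc (hcsne i)).2
    have h2 := (hσ (σ i.castSucc) (hσ i.castSucc (hcsne i)).1).2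
    have h3 : α (σ (σ i.castSucc)) = α i.castSucc := by linarith
    have h4 := hαmono.injective h3
    rw [h4]
    simp
  -- sums
  set d : Fin (k + 1) → ℕ := fun i => Module.finrank ℝ (U i) with hddef
  have hdim2 : ∀ i, i ≠ Fin.last k → d (σ i) = d i := hdim
  have hdlast2 : d (Fin.last k) = 1 := hdlast
  have hdsum' : ∑ i : Fin k, d i.castSucc = 2 * n := by
    have h1 : ∑ i, d i = 2 * n + 1 := hdsum
    rw [Fin.sum_univ_castSucc] at h1
    have h2 : d (Fin.last k) = 1 := hdlast
    omega
  have hsplit : ∑ i : Fin (k + 1), (d i : ℝ) * α i =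
      (∑ i : Fin k, (d i.castSucc : ℝ) * α i.castSucc) + (d (Fin.last k) : ℝ) * α (Fin.last k) :=
    Fin.sum_univ_castSucc _
  have hre : ∑ i : Fin k, (d i.castSucc : ℝ) * α i.castSucc =
      ∑ i : Fin k, (d (τ i).castSucc : ℝ) * α (τ i).castSucc :=
    (Equiv.sum_comp (hτinv.toPerm τ) (fun i => (d i.castSucc : ℝ) * α i.castSucc)).symm
  have hT : 2 * (∑ i : Fin k, (d i.castSucc : ℝ) * α i.castSucc) =
      2 * ((n : ℝ) * α (Fin.last k)) := by
    have step : (∑ i : Fin k, (d i.castSucc : ℝ) * α i.castSucc) +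
        (∑ i : Fin k, (d i.castSucc : ℝ) * α i.castSucc) =
        ∑ i : Fin k, (d i.castSucc : ℝ) * α (Fin.last k) := by
      nth_rewrite 2 [hre]
      rw [← Finset.sum_add_distrib]
      refine Finset.sum_congr rfl fun i _ => ?_
      rw [hτcast i, hdim2 i.castSucc (hcsne i)]
      have h5 := (hσ i.castSucc (hcsne i)).2
      rw [← mul_add, h5]
    rw [two_mul, step, ← Finset.sum_mul]
    have : (∑ i : Fin k, (d i.castSucc : ℝ)) = 2 * (n : ℝ) := by
      rw [← Nat.cast_sum, hdsum']
      push_cast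
      ring
    rw [this]
    ring
  have hTval : (∑ i : Fin k, (d i.castSucc : ℝ) * α i.castSucc) =
      (n : ℝ) * α (Fin.last k) := by linarith
  rw [hsplit, hTval, hdlast2]
  rw [← hσ0, hσ0κ']
  push_cast
  ring
end Aux4

section Aux5

variable {n k : ℕ}
  (α : Fin (k + 1) → ℝ)
  (U : Fin (k + 1) → Submodule ℝ (HV n))
variable
  (hαpos : ∀ i, 0 < α i)
  (hUspan : (⨆ i, U i) = ⊤)
  (hUorth : ∀ i j, i ≠ j → ∀ x ∈ U i, ∀ y ∈ U j, (inner ℝ x y : ℝ) = 0)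

/-- the dilation by `r` adapted to the grading `U` -/
def Dr (r : ℝ) : HV n →ₗ[ℝ] HV n := ∑ i, (r ^ α i : ℝ) • Plin U i

lemma normA_eq (w : HV n) : normA α U w = ∑ i, ‖Plin U i w‖ ^ (α i)⁻¹ := rfl

lemma Dr_apply (r : ℝ) (x : HV n) :
    Dr α U r x = ∑ i, (r ^ α i : ℝ) • Plin U i x := by
  rw [Dr, LinearMap.sum_apply]
  exact Finset.sum_congr rfl fun i _ => rfl

include hUorth hUspan

lemma Plin_ext {x y : HV n} (h : ∀ j, Plin U j x = Plin U j y) : x = y := by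
  rw [← Plin_decomp U hUorth hUspan x, ← Plin_decomp U hUorth hUspan y]
  exact Finset.sum_congr rfl fun j _ => h j

lemma Plin_Dr (r : ℝ) (x : HV n) (j : Fin (k + 1)) :
    Plin U j (Dr α U r x) = (r ^ α j : ℝ) • Plin U j x := by
  rw [Dr_apply]
  exact Plin_unique U hUorth hUspan _
    (fun i => Submodule.smul_mem _ _ (SetLike.coe_mem _)) j

lemma Dr_on_U {r : ℝ} {j : Fin (k + 1)} {y : HV n} (hy : y ∈ U j) :
    Dr α U r y = (r ^ α j : ℝ) • y := by
  rw [Dr_apply]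
  refine (Finset.sum_eq_single j ?_ ?_).trans ?_
  · intro l _ hl
    rw [Plin_zero U hUorth hl hy, smul_zero]
  · intro hm; exact absurd (Finset.mem_univ _) hm
  · rw [Plin_self U hy]

lemma Dr_comp {r r' : ℝ} (hr : 0 ≤ r) (hr' : 0 ≤ r') (x : HV n) :
    Dr α U r (Dr α U r' x) = Dr α U (r * r') x := by
  refine Plin_ext U hUspan hUorth fun j => ?_
  rw [Plin_Dr α U hUspan hUorth, Plin_Dr α U hUspan hUorth,
    Plin_Dr α U hUspan hUorth, smul_smul, Real.mul_rpow hr hr']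

lemma Dr_one (x : HV n) : Dr α U 1 x = x := by
  refine Plin_ext U hUspan hUorth fun j => ?_
  rw [Plin_Dr α U hUspan hUorth, Real.one_rpow, one_smul]

include hαpos

lemma normA_Dr {r : ℝ} (hr : 0 < r) (x : HV n) :
    normA α U (Dr α U r x) = r * normA α U x := by
  rw [normA_eq, normA_eq, Finset.mul_sum]
  refine Finset.sum_congr rfl fun i _ => ?_
  rw [Plin_Dr α U hUspan hUorth, norm_smul, Real.norm_eq_abs,
    abs_of_pos (Real.rpow_pos_of_pos hr _),
    Real.mul_rpow (le_of_lt (Real.rpow_pos_of_pos hr _)) (norm_nonneg _),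
    ← Real.rpow_mul hr.le, mul_inv_cancel₀ (ne_of_gt (hαpos i)), Real.rpow_one]

lemma normA_nonneg (w : HV n) : 0 ≤ normA α U w := by
  rw [normA_eq]
  exact Finset.sum_nonneg fun i _ => Real.rpow_nonneg (norm_nonneg _) _

lemma ball_eq_image {r : ℝ} (hr : 0 < r) :
    {z : HV n | normA α U z < r} = Dr α U r '' {z : HV n | normA α U z < 1} := by
  ext z
  simp only [Set.mem_setOf_eq, Set.mem_image]
  constructor
  · intro hz
    refine ⟨Dr α U r⁻¹ z, ?_, ?_⟩
    · rw [normA_Dr α U hαpos hUspan hUorth (by positivity)]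
      rw [inv_mul_lt_iff₀ hr, mul_one]
      exact hz
    · rw [Dr_comp α U hUspan hUorth hr.le (by positivity),
        mul_inv_cancel₀ (ne_of_gt hr), Dr_one α U hUspan hUorth]
  · rintro ⟨w, hw, rfl⟩
    rw [normA_Dr α U hαpos hUspan hUorth hr]
    calc r * normA α U w < r * 1 := by
          exact (mul_lt_mul_iff_right₀ hr).mpr hw
      _ = r := mul_one r

end Aux5

section Aux6

lemma toMatrix_diag {ι : Type*} [Fintype ι] [DecidableEq ι] {V : Type*}
    [AddCommGroup V] [Module ℝ V] (bb : Basis ι ℝ V) (F : V →ₗ[ℝ] V) (c : ι → ℝ)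
    (h : ∀ p, F (bb p) = c p • bb p) :
    LinearMap.toMatrix bb bb F = Matrix.diagonal c := by
  ext p q
  rw [LinearMap.toMatrix_apply, h, map_smul, bb.repr_self]
  rw [Matrix.diagonal_apply]
  simp only [Finsupp.smul_apply, smul_eq_mul, Finsupp.single_apply]
  by_cases hpq : p = q
  · subst hpq; simp
  · rw [if_neg hpq, if_neg (fun hc : q = p => hpq hc.symm), mul_zero]

lemma prod_rpow_sum {ι : Type*} [Fintype ι] {r : ℝ} (hr : 0 < r) (f : ι → ℝ) :
    ∏ p, r ^ f p = r ^ (∑ p, f p) := by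
  calc ∏ p, r ^ f p = ∏ p, Real.exp (Real.log r * f p) :=
        Finset.prod_congr rfl fun p _ => Real.rpow_def_of_pos hr _
    _ = Real.exp (∑ p, Real.log r * f p) := (Real.exp_sum _ _).symm
    _ = Real.exp (Real.log r * ∑ p, f p) := by rw [← Finset.mul_sum]
    _ = r ^ (∑ p, f p) := (Real.rpow_def_of_pos hr _).symm

variable {n k : ℕ}
  (α : Fin (k + 1) → ℝ)
  (U : Fin (k + 1) → Submodule ℝ (HV n))
variable
  (hUspan : (⨆ i, U i) = ⊤)
  (hUorth : ∀ i j, i ≠ j → ∀ x ∈ U i, ∀ y ∈ U j, (inner ℝ x y : ℝ) = 0)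

include hUspan hUorth

lemma exists_eigbasis :
    ∃ bb : Basis (Σ i : Fin (k + 1), Fin (Module.finrank ℝ (U i))) ℝ (HV n),
      ∀ p, bb p ∈ U p.1 := by
  classical
  have hfam : OrthogonalFamily ℝ (fun i => U i) (fun i => (U i).subtypeₗᵢ) :=
    fun i j hij v w => hUorth i j hij v v.2 w w.2
  have hint : DirectSum.IsInternal U :=
    DirectSum.isInternal_submodule_of_iSupIndep_of_iSup_eq_top hfam.independent hUspan
  exact ⟨hint.collectedBasis (fun i => Module.finBasis ℝ (U i)),
    fun p => hint.collectedBasis_mem _ p⟩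

lemma hdsum_formula : ∑ i, Module.finrank ℝ (U i) = 2 * n + 1 := by
  obtain ⟨bb, -⟩ := exists_eigbasis U hUspan hUorth
  have h1 := Module.finrank_eq_card_basis bb
  rw [finrank_euclideanSpace_fin] at h1
  have h2 : Fintype.card ((i : Fin (k + 1)) × Fin (Module.finrank ℝ (U i))) =
      ∑ i, Module.finrank ℝ (U i) := by
    rw [Fintype.card_sigma]
    simp [Fintype.card_fin]
  omega

lemma trace_det_general (F : HV n →ₗ[ℝ] HV n) (c : Fin (k + 1) → ℝ)
    (hF : ∀ i, ∀ y ∈ U i, F y = c i • y) :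
    LinearMap.trace ℝ (HV n) F = ∑ i, (Module.finrank ℝ (U i) : ℝ) * c i ∧
    LinearMap.det F = ∏ i, c i ^ (Module.finrank ℝ (U i)) := by
  classical
  obtain ⟨bb, hbb⟩ := exists_eigbasis U hUspan hUorth
  have hdiag : LinearMap.toMatrix bb bb F = Matrix.diagonal (fun p => c p.1) :=
    toMatrix_diag bb F _ (fun p => hF p.1 _ (hbb p))
  constructor
  · rw [LinearMap.trace_eq_matrix_trace ℝ bb F, hdiag, Matrix.trace_diagonal]
    rw [← Finset.univ_sigma_univ, Finset.sum_sigma]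
    refine Finset.sum_congr rfl fun i _ => ?_
    dsimp only
    rw [Finset.sum_const, Finset.card_univ, Fintype.card_fin, nsmul_eq_mul]
  · rw [← LinearMap.det_toMatrix bb, hdiag, Matrix.det_diagonal]
    rw [← Finset.univ_sigma_univ, Finset.prod_sigma]
    refine Finset.prod_congr rfl fun i _ => ?_
    dsimp only
    rw [Finset.prod_const, Finset.card_univ, Fintype.card_fin]

lemma det_Dr_formula {r : ℝ} (hr : 0 < r) :
    LinearMap.det (Dr α U r) =
      r ^ (∑ i, (Module.finrank ℝ (U i) : ℝ) * α i) := by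
  have h := (trace_det_general U hUspan hUorth (Dr α U r) (fun i => r ^ α i)
    (fun i y hy => Dr_on_U α U hUspan hUorth hy)).2
  rw [h]
  have : ∀ i : Fin (k + 1), (r ^ α i) ^ (Module.finrank ℝ (U i)) =
      r ^ ((Module.finrank ℝ (U i) : ℝ) * α i) := by
    intro i
    rw [← Real.rpow_natCast (r ^ α i) _, ← Real.rpow_mul hr.le, mul_comm]
  rw [Finset.prod_congr rfl fun i _ => this i]
  rw [prod_rpow_sum hr]

end Aux6

section Aux7

variable {n : ℕ} (br : HV n →ₗ[ℝ] HV n →ₗ[ℝ] HV n)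
  (b : Basis (Fin (2 * n + 1)) ℝ (HV n))
variable (hb : ∀ i j : Fin (2 * n + 1),
      br (b i) (b j) =
        (if (i : ℕ) % 2 = 0 ∧ (j : ℕ) = (i : ℕ) + 1 ∧ (i : ℕ) < 2 * n then (1 : ℝ)
         else if (j : ℕ) % 2 = 0 ∧ (i : ℕ) = (j : ℕ) + 1 ∧ (j : ℕ) < 2 * n then (-1 : ℝ)
         else 0) • b (lidx n))

include hb

lemma det_trans (x : HV n) :
    LinearMap.det (LinearMap.id + (2⁻¹ : ℝ) • br x) = 1 := by
  classical
  set N : HV n →ₗ[ℝ] HV n := (2⁻¹ : ℝ) • br x with hNdef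
  have hNspan : ∀ y, N y ∈ Submodule.span ℝ {b (lidx n)} := by
    intro y
    exact Submodule.smul_mem _ _ (br_mem_span br b hb x y)
  have hNZ : N (b (lidx n)) = 0 := by
    rw [hNdef, LinearMap.smul_apply, br_Z_right br b hb x, smul_zero]
  have span_repr : ∀ w ∈ Submodule.span ℝ ({b (lidx n)} : Set (HV n)),
      w = (b.coord (lidx n) w) • b (lidx n) := by
    intro w hw
    obtain ⟨c, hc⟩ := Submodule.mem_span_singleton.mp hw
    rw [← hc, map_smul, Basis.coord_apply, Basis.repr_self]
    simp
  set u : Fin (2 * n + 1) → ℝ := fun p => b.repr (b (lidx n)) p with hudef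
  set v : Fin (2 * n + 1) → ℝ := fun q => b.coord (lidx n) (N (b q)) with hvdef
  have hmat : LinearMap.toMatrix b b N = Matrix.replicateCol Unit u * Matrix.replicateRow Unit v := by
    ext p q
    rw [LinearMap.toMatrix_apply]
    conv_lhs => rw [span_repr (N (b q)) (hNspan _)]
    rw [map_smul]
    simp only [Matrix.mul_apply, Matrix.replicateCol_apply, Matrix.replicateRow_apply, Finset.univ_unique,
      Finset.sum_singleton, Finsupp.smul_apply, smul_eq_mul, hudef, hvdef]
    ring
  have hdot : dotProduct v u = 0 := by
    have h1 : dotProduct v u = ∑ q, v q * u q := rfl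
    have h2 : ∑ q, v q * u q = v (lidx n) * u (lidx n) :=
      Finset.sum_eq_single (lidx n)
        (fun l _ hl => by
          have hu : u l = 0 := by
            rw [hudef]
            simp only [Basis.repr_self]
            exact Finsupp.single_eq_of_ne hl
          rw [hu, mul_zero])
        (fun hm => absurd (Finset.mem_univ _) hm)
    rw [h1, h2, hvdef]
    simp only [hNZ, map_zero, zero_mul]
  rw [← LinearMap.det_toMatrix b, map_add, LinearMap.toMatrix_id, hmat,
    Matrix.det_one_add_replicateCol_mul_replicateRow, hdot, add_zero]

end Aux7

theorem stmt6
    (n k : ℕ) (hn : 1 ≤ n) (hk : 1 ≤ k)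
    (br : HV n →ₗ[ℝ] HV n →ₗ[ℝ] HV n) (hbr : IsHeisenbergBracket n br)
    (A : HV n →ₗ[ℝ] HV n) (hA : IsDerivation br A)
    (α : Fin (k + 1) → ℝ) (hαmono : StrictMono α) (hαpos : ∀ i, 0 < α i)
    (U : Fin (k + 1) → Submodule ℝ (HV n))
    (hU : ∀ i, U i = Module.End.eigenspace A (α i))
    (hUne : ∀ i, U i ≠ ⊥) (hUspan : (⨆ i, U i) = ⊤)
    (hUorth : ∀ i j, i ≠ j → ∀ x ∈ U i, ∀ y ∈ U j, (inner ℝ x y : ℝ) = 0)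
    (hbrnorm : ∀ x y : HV n, ‖br x y‖ ≤ ‖x‖ * ‖y‖) :
    LinearMap.trace ℝ (HV n) A = ((n : ℝ) + 1) * (α 0 + α ⟨k - 1, by omega⟩) ∧
    ∀ (x : HV n) (r : ℝ), 0 < r →
      MeasureTheory.volume {y : HV n | qd br α U x y < r} =
        ENNReal.ofReal (r ^ (((n : ℝ) + 1) * (α 0 + α ⟨k - 1, by omega⟩))) *
          MeasureTheory.volume {y : HV n | qd br α U 0 y < 1} := by
  obtain ⟨b, hb0⟩ := hbr
  have hb : ∀ i j : Fin (2 * n + 1),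
      br (b i) (b j) =
        (if (i : ℕ) % 2 = 0 ∧ (j : ℕ) = (i : ℕ) + 1 ∧ (i : ℕ) < 2 * n then (1 : ℝ)
         else if (j : ℕ) % 2 = 0 ∧ (i : ℕ) = (j : ℕ) + 1 ∧ (j : ℕ) < 2 * n then (-1 : ℝ)
         else 0) • b (lidx n) := hb0
  have hdsum := hdsum_formula U hUspan hUorth
  have hsum := alpha_sum_eq br b A α U hb hA hαmono hαpos hU hUne hUspan hUorth hn hk hdsum
  have htr := (trace_det_general U hUspan hUorth A α
    (fun i y hy => eig_apply A α U hU hy)).1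
  constructor
  · rw [htr, hsum]
  · intro x r hr
    have hqd0 : {y : HV n | qd br α U 0 y < 1} = {z : HV n | normA α U z < 1} := by
      ext y
      simp only [Set.mem_setOf_eq, qd, hMul, neg_zero, map_zero, LinearMap.zero_apply,
        smul_zero, zero_add, add_zero]
    set L : HV n →ₗ[ℝ] HV n := LinearMap.id + (2⁻¹ : ℝ) • br (-x) with hLdef
    have hdetL : LinearMap.det L = 1 := det_trans br b hb (-x)
    have hset : {y : HV n | qd br α U x y < r} =
        L ⁻¹' ((fun w => (-x) + w) ⁻¹' {z : HV n | normA α U z < r}) := by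
      ext y
      simp only [Set.mem_setOf_eq, Set.mem_preimage, qd]
      have hL : (-x) + L y = hMul br (-x) y := by
        rw [hLdef]
        simp only [LinearMap.add_apply, LinearMap.id_apply, LinearMap.smul_apply, hMul]
        abel
      rw [← hL]
    rw [hset]
    rw [MeasureTheory.Measure.addHaar_preimage_linearMap MeasureTheory.volume
      (by rw [hdetL]; exact one_ne_zero) _]
    rw [hdetL]
    rw [MeasureTheory.measure_preimage_add MeasureTheory.volume (-x) _]
    simp only [inv_one, abs_one, ENNReal.ofReal_one, one_mul]
    rw [ball_eq_image α U hαpos hUspan hUorth hr]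
    rw [MeasureTheory.Measure.addHaar_image_linearMap MeasureTheory.volume (Dr α U r) _]
    rw [det_Dr_formula α U hUspan hUorth hr]
    rw [abs_of_pos (Real.rpow_pos_of_pos hr _)]
    rw [hqd0, hsum]
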